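/- (Hurwitz) For the continued fraction algorithm with α = 1/2 (nearest-integer continued fractions), the denominators q'_n of the convergents of any irrational x satisfy q'_n / q'_{n+1} ≤ g = (√5−1)/2 for all n ≥ 0. -/

import Mathlib

noncomputable section

/-- `ᾱ = max(α, 1-α)`. -/
def abar (α : ℝ) : ℝ := max α (1 - α)

/-- The Nakada `α`-continued fraction map `A_α(x) = |1/x − ⌊1/x + 1 − α⌋|`. -/
def Amap (α x : ℝ) : ℝ := |1 / x - ⌊1 / x + 1 - α⌋|

/-- The orbit `x_{α,n} = A_α^n(x)`. -/
def xseq (α x : ℝ) (n : ℕ) : ℝ := (Amap α)^[n] x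

/-- The partial quotients `a_{α,n}`. -/
def dig (α x : ℝ) : ℕ → ℤ
  | 0 => ⌊x + 1 - abar α⌋
  | n + 1 => ⌊1 / xseq α x n + 1 - α⌋

/-- The signs `ε_{α,n} ∈ {±1}`. -/
def sgn (α x : ℝ) : ℕ → ℝ
  | 0 => Real.sign (x - ⌊x + 1 - abar α⌋)
  | n + 1 => Real.sign (1 / xseq α x n - ⌊1 / xseq α x n + 1 - α⌋)

/-- The matrix products defining the convergents:
`M_n = (1, a₀; 0, 1) · ∏_{k=1}^n (0, ε_{k−1}; 1, a_k)`. -/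
def Mmat (α x : ℝ) : ℕ → Matrix (Fin 2) (Fin 2) ℝ
  | 0 => !![1, (dig α x 0 : ℝ); 0, 1]
  | n + 1 => Mmat α x n * !![0, sgn α x n; 1, (dig α x (n + 1) : ℝ)]

/-- Numerator `p_{α,n}` of the `n`th convergent. -/
def pconv (α x : ℝ) (n : ℕ) : ℝ := Mmat α x n 0 1

/-- Denominator `q_{α,n}` of the `n`th convergent. -/
def qconv (α x : ℝ) (n : ℕ) : ℝ := Mmat α x n 1 1

/-- `β_{α,n} = ∏_{i=0}^n A_α^i(x)`. -/
def betaseq (α x : ℝ) (n : ℕ) : ℝ := ∏ i ∈ Finset.range (n + 1), xseq α x i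

namespace Hurwitz13

lemma sign_eq_neg_one (w : ℝ) (h : Real.sign w = -1) : w < 0 := by
  by_contra hc
  push_neg at hc
  rcases eq_or_lt_of_le hc with h0 | h0
  · simp [← h0, Real.sign_zero] at h
  · rw [Real.sign_of_pos h0] at h; norm_num at h

lemma sign_pm (w : ℝ) (h : w ≠ 0) : Real.sign w = 1 ∨ Real.sign w = -1 := by
  rcases h.lt_or_gt with h | h
  · exact Or.inr (Real.sign_of_neg h)
  · exact Or.inl (Real.sign_of_pos h)

/-- The step: `Amap (1/2)` preserves irrationals in `(0, 1/2)`. -/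
lemma Amap_step (y : ℝ) (hy : Irrational y) (h0 : 0 < y) (h2 : y < 1 / 2) :
    Irrational (Amap (1/2) y) ∧ 0 < Amap (1/2) y ∧ Amap (1/2) y < 1 / 2 := by
  have hy0 : y ≠ 0 := ne_of_gt h0
  have hz : Irrational (1 / y) := by
    simpa [one_div] using hy.inv
  set z : ℝ := 1 / y with hzdef
  set m : ℤ := ⌊z + 1 - (1/2 : ℝ)⌋ with hm
  have hzm : Irrational (z - m) := hz.sub_intCast m
  have hne : z - (m : ℝ) ≠ 0 := hzm.ne_zero
  have hAm : Amap (1/2) y = |z - m| := by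
    simp [Amap, hzdef, hm]
  have hfl : (m : ℝ) ≤ z + 1 - 1/2 := by
    have := Int.floor_le (z + 1 - (1/2 : ℝ)); simpa [hm] using this
  have hfu : z + 1 - 1/2 < m + 1 := by
    have := Int.lt_floor_add_one (z + 1 - (1/2 : ℝ)); simpa [hm] using this
  -- so  -1/2 ≤ z - m < 1/2, and z - m ≠ -1/2 since irrational
  have hlow : -(1/2 : ℝ) ≤ z - m := by linarith
  have hup : z - m < 1/2 := by linarith
  have hnehalf : z - (m : ℝ) ≠ -(1/2 : ℝ) := by
    intro hcon
    have : Irrational (-(1/2 : ℝ)) := hcon ▸ hzm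
    exact this ⟨(-(1/2) : ℚ), by norm_num⟩
  have hlow' : -(1/2 : ℝ) < z - m := lt_of_le_of_ne hlow (fun h => hnehalf h.symm)
  have habs : |z - m| < 1/2 := abs_lt.mpr ⟨hlow', hup⟩
  refine ⟨?_, ?_, ?_⟩
  · rw [hAm]
    rcases abs_choice (z - (m : ℝ)) with h | h
    · rw [h]; exact hzm
    · rw [h]; exact hzm.neg
  · rw [hAm]; exact abs_pos.mpr hne
  · rw [hAm]; exact habs

variable (x : ℝ)

lemma xseq_props (hx : Irrational x) (h0 : 0 < x) (h2 : x < 1 / 2) :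
    ∀ n, Irrational (xseq (1/2) x n) ∧ 0 < xseq (1/2) x n ∧ xseq (1/2) x n < 1/2 := by
  intro n
  induction n with
  | zero => exact ⟨by simpa [xseq] using hx, by simpa [xseq] using h0, by simpa [xseq] using h2⟩
  | succ n ih =>
    have hstep : xseq (1/2) x (n+1) = Amap (1/2) (xseq (1/2) x n) := by
      simp [xseq, Function.iterate_succ_apply']
    rw [hstep]
    exact Amap_step _ ih.1 ih.2.1 ih.2.2

/-- One over an element of the orbit exceeds 2. -/
lemma inv_gt_two {y : ℝ} (h0 : 0 < y) (h2 : y < 1/2) : 2 < 1 / y := by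
  rw [lt_div_iff₀ h0]; linarith

lemma dig_ge_two (hx : Irrational x) (h0 : 0 < x) (h2 : x < 1 / 2) (n : ℕ) :
    (2 : ℤ) ≤ dig (1/2) x (n + 1) := by
  obtain ⟨_, hp, hq⟩ := xseq_props x hx h0 h2 n
  have h := inv_gt_two hp hq
  have : (2 : ℝ) ≤ 1 / xseq (1/2) x n + 1 - 1/2 := by linarith
  have := Int.le_floor.mpr (by exact_mod_cast this : ((2 : ℤ) : ℝ) ≤ 1 / xseq (1/2) x n + 1 - 1/2)
  simpa [dig] using this

lemma sgn_pm (hx : Irrational x) (h0 : 0 < x) (h2 : x < 1 / 2) (n : ℕ) :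
    sgn (1/2) x (n + 1) = 1 ∨ sgn (1/2) x (n + 1) = -1 := by
  obtain ⟨hirr, hp, _⟩ := xseq_props x hx h0 h2 n
  have hzi : Irrational (1 / xseq (1/2) x n) := by simpa [one_div] using hirr.inv
  have hne : 1 / xseq (1/2) x n - (⌊1 / xseq (1/2) x n + 1 - (1/2:ℝ)⌋ : ℝ) ≠ 0 :=
    (hzi.sub_intCast _).ne_zero
  have := sign_pm _ hne
  simpa [sgn] using this

lemma dig_ge_three (hx : Irrational x) (h0 : 0 < x) (h2 : x < 1 / 2) (n : ℕ)
    (hs : sgn (1/2) x (n + 1) = -1) : (3 : ℤ) ≤ dig (1/2) x (n + 1) := by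
  obtain ⟨_, hp, hq⟩ := xseq_props x hx h0 h2 n
  have hgt := inv_gt_two hp hq
  have hneg : 1 / xseq (1/2) x n - (⌊1 / xseq (1/2) x n + 1 - (1/2:ℝ)⌋ : ℝ) < 0 := by
    apply sign_eq_neg_one
    simpa [sgn] using hs
  have h2lt : (2 : ℝ) < (dig (1/2) x (n+1) : ℝ) := by
    have : dig (1/2) x (n+1) = ⌊1 / xseq (1/2) x n + 1 - (1/2:ℝ)⌋ := by simp [dig]
    rw [this]; linarith
  have h2i : (2:ℤ) < dig (1/2) x (n+1) := by exact_mod_cast h2lt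
  omega

lemma sgn_zero (h0 : 0 < x) (h2 : x < 1 / 2) : sgn (1/2) x 0 = 1 := by
  have habar : abar (1/2 : ℝ) = 1/2 := by norm_num [abar]
  have hfl : ⌊x + 1 - abar (1/2 : ℝ)⌋ = 0 := by
    rw [habar, Int.floor_eq_zero_iff]
    constructor <;> simp <;> linarith
  simp only [sgn, hfl]
  have : (0:ℝ) < x - ((0 : ℤ) : ℝ) := by simpa using h0
  simpa using Real.sign_of_pos this

lemma dig_zero (h0 : 0 < x) (h2 : x < 1 / 2) : dig (1/2) x 0 = 0 := by
  have habar : abar (1/2 : ℝ) = 1/2 := by norm_num [abar]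
  simp only [dig, habar, Int.floor_eq_zero_iff]
  constructor <;> simp <;> linarith

lemma q_rec (n : ℕ) :
    qconv (1/2) x (n + 1) =
      (dig (1/2) x (n+1) : ℝ) * qconv (1/2) x n + sgn (1/2) x n * Mmat (1/2) x n 1 0 := by
  simp [qconv, Mmat, Matrix.mul_apply, Fin.sum_univ_two]
  ring

lemma r_rec (n : ℕ) : Mmat (1/2) x (n + 1) 1 0 = qconv (1/2) x n := by
  simp [qconv, Mmat, Matrix.mul_apply, Fin.sum_univ_two]

lemma sqrt5_facts : (2:ℝ) < Real.sqrt 5 ∧ Real.sqrt 5 < 3 ∧ Real.sqrt 5 * Real.sqrt 5 = 5 := by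
  have hsq : Real.sqrt 5 * Real.sqrt 5 = 5 := Real.mul_self_sqrt (by norm_num)
  have hpos : 0 < Real.sqrt 5 := Real.sqrt_pos.mpr (by norm_num)
  refine ⟨?_, ?_, hsq⟩
  · nlinarith
  · nlinarith

/-- Main induction. `G = (√5+1)/2`. -/
lemma main_ind (hx : Irrational x) (h0 : 0 < x) (h2 : x < 1 / 2) :
    ∀ n, 0 ≤ Mmat (1/2) x n 1 0 ∧ 0 < qconv (1/2) x n ∧
      (Real.sqrt 5 + 1)/2 * Mmat (1/2) x n 1 0 ≤ qconv (1/2) x n ∧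
      (sgn (1/2) x n = -1 →
        ((Real.sqrt 5 + 1)/2 + 1) * Mmat (1/2) x n 1 0 ≤ qconv (1/2) x n) := by
  obtain ⟨hs2, hs3, hsq⟩ := sqrt5_facts
  intro n
  induction n with
  | zero =>
    have hM : Mmat (1/2) x 0 1 0 = 0 := by simp [Mmat]
    have hq : qconv (1/2) x 0 = 1 := by simp [qconv, Mmat]
    refine ⟨by rw [hM], by rw [hq]; norm_num, by rw [hM, hq]; norm_num, ?_⟩
    intro hcon
    rw [sgn_zero x h0 h2] at hcon; norm_num at hcon
  | succ n ih =>
    obtain ⟨hr0, hq0, hGq, hextra⟩ := ih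
    set G : ℝ := (Real.sqrt 5 + 1)/2 with hG
    have hGpos : 0 < G := by rw [hG]; nlinarith
    have hG2 : G < 2 := by rw [hG]; nlinarith
    have hG3 : G + 1 < 3 := by rw [hG]; nlinarith
    have hGsq : G * G = G + 1 := by rw [hG]; nlinarith
    have hrq : Mmat (1/2) x (n+1) 1 0 = qconv (1/2) x n := r_rec x n
    have hrec := q_rec x n
    have ha2 : (2:ℝ) ≤ (dig (1/2) x (n+1) : ℝ) := by exact_mod_cast dig_ge_two x hx h0 h2 n
    have ha3 : sgn (1/2) x (n+1) = -1 → (3:ℝ) ≤ (dig (1/2) x (n+1) : ℝ) := by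
      intro hs; exact_mod_cast dig_ge_three x hx h0 h2 n hs
    have hsn : sgn (1/2) x n = 1 ∨ sgn (1/2) x n = -1 := by
      cases n with
      | zero => exact Or.inl (sgn_zero x h0 h2)
      | succ m => exact sgn_pm x hx h0 h2 m
    have hmain : G * qconv (1/2) x n ≤ qconv (1/2) x (n+1) ∧
        (sgn (1/2) x (n+1) = -1 →
          (G + 1) * qconv (1/2) x n ≤ qconv (1/2) x (n+1)) := by
      set a : ℝ := (dig (1/2) x (n+1) : ℝ)
      set q : ℝ := qconv (1/2) x n
      set r : ℝ := Mmat (1/2) x n 1 0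
      rcases hsn with hs | hs
      · rw [hrec, hs]
        constructor
        · nlinarith
        · intro hneg
          have h3 := ha3 hneg
          nlinarith
      · rw [hrec, hs]
        have hex := hextra hs
        have h1 : 0 ≤ (2 - G) * (q - (G+1)*r) := by
          apply mul_nonneg <;> linarith
        constructor
        · nlinarith
        · intro hneg
          have h3 := ha3 hneg
          nlinarith
    refine ⟨by rw [hrq]; exact hq0.le, ?_, by rw [hrq]; exact hmain.1, ?_⟩
    · calc (0:ℝ) < G * qconv (1/2) x n := by positivity
        _ ≤ qconv (1/2) x (n+1) := hmain.1
    · intro hs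
      rw [hrq]
      exact hmain.2 hs

end Hurwitz13

theorem stmt13 (x : ℝ) (hx : Irrational x) (hdom : x ∈ Set.Ioo 0 (1 / 2 : ℝ)) :
    ∀ n : ℕ, qconv (1 / 2) x n / qconv (1 / 2) x (n + 1) ≤ (Real.sqrt 5 - 1) / 2 := by
  obtain ⟨h0, h2⟩ := hdom
  intro n
  obtain ⟨hs2, hs3, hsq⟩ := Hurwitz13.sqrt5_facts
  obtain ⟨_, hqn, _, _⟩ := Hurwitz13.main_ind x hx h0 h2 n
  obtain ⟨_, hq1, hGq, _⟩ := Hurwitz13.main_ind x hx h0 h2 (n+1)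
  rw [Hurwitz13.r_rec x n] at hGq
  rw [div_le_iff₀ hq1]
  nlinarith [mul_nonneg (by nlinarith : (0:ℝ) ≤ (Real.sqrt 5 - 1)/2)
    (sub_nonneg.mpr hGq)]
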